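/- Let (Ω, F, P) be a probability space and (ξ_n)_{n≥1} a sequence of real-valued random variables such that: (i) there exists M > 0 with |ξ_n| ≤ M almost surely for every n; (ii) the sequence is finitely dependent, i.e. there exists K ∈ ℕ such that for every n and every K₁ ≥ K the random variables ξ_n and ξ_{n+K₁} are independent; (iii) there is a constant c with E[ξ_n] ≥ c for every n. Then almost surely liminf_{N→∞} (1/N) Σ_{n=1}^{N} ξ_n ≥ c. -/

import Mathlib

open MeasureTheory Filter

private lemma fd_sqrt_tendsto : Tendsto Nat.sqrt atTop atTop := by
  apply tendsto_atTop_atTop.2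
  intro k
  exact ⟨k * k, fun N hN => Nat.le_sqrt.2 hN⟩

/-- Deterministic gap-filling: if the normalized sums converge to `0` along squares
and the increments are uniformly bounded, then the normalized sums converge to `0`. -/
private lemma fd_gap (M : ℝ) (hM : 0 < M) (S : ℕ → ℝ)
    (hdiff : ∀ a b : ℕ, a ≤ b → |S b - S a| ≤ 2 * M * ((b : ℝ) - a))
    (hT : Tendsto (fun m : ℕ => S (m ^ 2) / ((m : ℝ)) ^ 2) atTop (nhds 0)) :
    Tendsto (fun N : ℕ => S N / N) atTop (nhds 0) := by
  rw [tendsto_zero_iff_abs_tendsto_zero]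
  have hb : Tendsto (fun N : ℕ =>
      |S ((Nat.sqrt N) ^ 2) / ((Nat.sqrt N : ℝ)) ^ 2| + 6 * M / (Nat.sqrt N : ℝ))
      atTop (nhds 0) := by
    have h1 : Tendsto (fun m : ℕ => |S (m ^ 2) / ((m : ℝ)) ^ 2| + 6 * M / (m : ℝ))
        atTop (nhds 0) := by
      have := (hT.abs).add (tendsto_const_div_atTop_nhds_zero_nat (6 * M))
      simpa using this
    exact h1.comp fd_sqrt_tendsto
  apply squeeze_zero' (Eventually.of_forall fun N => abs_nonneg _) _ hb
  filter_upwards [eventually_ge_atTop 1] with N hN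
  set m := Nat.sqrt N with hm
  have hm1 : 1 ≤ m := Nat.le_sqrt.2 (by omega)
  have hmN : m ^ 2 ≤ N := Nat.sqrt_le' N
  have hNm : N < (m + 1) ^ 2 := Nat.lt_succ_sqrt' N
  have hmR : (0 : ℝ) < (m : ℝ) ^ 2 := by positivity
  have hNR : (0 : ℝ) < (N : ℝ) := by exact_mod_cast Nat.lt_of_lt_of_le Nat.zero_lt_one hN
  have hm2N : ((m : ℝ)) ^ 2 ≤ (N : ℝ) := by exact_mod_cast hmN
  have h1 : |S N| ≤ |S (m ^ 2)| + 2 * M * ((N : ℝ) - (m ^ 2 : ℕ)) := by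
    have := hdiff (m ^ 2) N hmN
    have h2 : |S N| ≤ |S (m ^ 2)| + |S N - S (m ^ 2)| := by
      have := abs_add_le (S (m ^ 2)) (S N - S (m ^ 2)); simpa using this
    linarith
  have hgap : ((N : ℝ) - ((m ^ 2 : ℕ) : ℝ)) ≤ 2 * m + 1 := by
    have : (N : ℝ) < ((m : ℝ) + 1) ^ 2 := by exact_mod_cast hNm
    push_cast
    nlinarith
  have h3 : |S N| ≤ |S (m ^ 2)| + 6 * M * m := by
    have hm1R : (1 : ℝ) ≤ (m : ℝ) := by exact_mod_cast hm1
    nlinarith [abs_nonneg (S (m ^ 2))]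
  calc |S N / N| = |S N| / N := by rw [abs_div, abs_of_pos hNR]
    _ ≤ (|S (m ^ 2)| + 6 * M * m) / N := by gcongr
    _ ≤ (|S (m ^ 2)| + 6 * M * m) / ((m : ℝ) ^ 2) := by
        apply div_le_div_of_nonneg_left _ hmR hm2N
        have hm1R : (1 : ℝ) ≤ (m : ℝ) := by exact_mod_cast hm1
        nlinarith [abs_nonneg (S (m ^ 2))]
    _ = |S (m ^ 2)| / (m : ℝ) ^ 2 + 6 * M * m / (m : ℝ) ^ 2 := by ring
    _ = |S (m ^ 2) / (m : ℝ) ^ 2| + 6 * M / m := by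
        rw [abs_div, abs_of_pos hmR]
        congr 1
        field_simp

/-- From summable second moments to almost sure convergence to zero. -/
private lemma fd_ae_tendsto {Ω : Type*} [MeasurableSpace Ω] (P : Measure Ω)
    [IsProbabilityMeasure P]
    (T : ℕ → Ω → ℝ) (hTmeas : ∀ m, Measurable (T m))
    (hTint : ∀ m, Integrable (fun ω => (T m ω) ^ 2) P)
    (B : ℝ)
    (hbound : ∀ m : ℕ, ∫ ω, (T m ω) ^ 2 ∂P ≤ B / (m : ℝ) ^ 2) :
    ∀ᵐ ω ∂P, Tendsto (fun m => T m ω) atTop (nhds 0) := by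
  have hmeas2 : ∀ m : ℕ, Measurable (fun ω => ENNReal.ofReal ((T m ω) ^ 2)) :=
    fun m => ((hTmeas m).pow_const 2).ennreal_ofReal
  have hsummable : Summable (fun m : ℕ => B / (m : ℝ) ^ 2) := by
    have := (Real.summable_one_div_nat_pow.mpr (le_refl 2)).mul_left B
    simpa [div_eq_mul_inv, one_div] using this
  have hnn' : ∀ m : ℕ, (0:ℝ) ≤ B / (m : ℝ) ^ 2 := by
    intro m
    rcases Nat.eq_zero_or_pos m with h | h
    · simp [h]
    · exact le_trans (integral_nonneg fun ω => sq_nonneg (T m ω)) (hbound m)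
  have h1 : ∀ m : ℕ, ∫⁻ ω, ENNReal.ofReal ((T m ω) ^ 2) ∂P
      = ENNReal.ofReal (∫ ω, (T m ω) ^ 2 ∂P) :=
    fun m => (ofReal_integral_eq_lintegral_ofReal (hTint m)
      (Eventually.of_forall fun ω => sq_nonneg _)).symm
  have hts : ∑' m : ℕ, ∫⁻ ω, ENNReal.ofReal ((T m ω) ^ 2) ∂P ≠ ⊤ := by
    have h2 : ∑' m : ℕ, ∫⁻ ω, ENNReal.ofReal ((T m ω) ^ 2) ∂P
        ≤ ∑' m : ℕ, ENNReal.ofReal (B / (m : ℝ) ^ 2) := by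
      apply ENNReal.tsum_le_tsum
      intro m
      rw [h1 m]
      exact ENNReal.ofReal_le_ofReal (hbound m)
    rw [← ENNReal.ofReal_tsum_of_nonneg hnn' hsummable] at h2
    exact ne_top_of_le_ne_top ENNReal.ofReal_ne_top h2
  have hae : ∀ᵐ ω ∂P, (∑' m : ℕ, ENNReal.ofReal ((T m ω) ^ 2)) < ⊤ := by
    apply ae_lt_top' (Measurable.aemeasurable (by measurability))
    rw [lintegral_tsum fun m => (hmeas2 m).aemeasurable]
    exact hts
  filter_upwards [hae] with ω hω
  have hsum : Summable (fun m : ℕ => (T m ω) ^ 2) := by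
    have := ENNReal.summable_toReal hω.ne
    simpa [ENNReal.toReal_ofReal (sq_nonneg _)] using this
  have h0 : Tendsto (fun m : ℕ => (T m ω) ^ 2) atTop (nhds 0) :=
    hsum.tendsto_atTop_zero
  rw [tendsto_zero_iff_abs_tendsto_zero]
  have : Tendsto (fun m : ℕ => Real.sqrt ((T m ω) ^ 2)) atTop (nhds 0) := by
    have := (Real.continuous_sqrt.tendsto 0).comp h0
    simpa [Function.comp_def] using this
  exact (by simpa [Real.sqrt_sq_eq_abs] using this : Tendsto (fun m => |T m ω|) atTop (nhds 0))

/-- Lemma 5.2: a finitely dependent sequence of a.s. uniformly bounded random variables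
whose expectations are all at least `c` satisfies
`liminf_{N→∞} (1/N) ∑_{n=1}^N ξ_n ≥ c` almost surely. -/
theorem finitely_dependent_bounded_liminf
    {Ω : Type*} [MeasurableSpace Ω] (P : Measure Ω) [IsProbabilityMeasure P]
    (ξ : ℕ → Ω → ℝ) (hmeas : ∀ n, Measurable (ξ n))
    (M : ℝ) (hM : 0 < M) (hbdd : ∀ n, ∀ᵐ ω ∂P, |ξ n ω| ≤ M)
    (K : ℕ) (hindep : ∀ n K₁, K ≤ K₁ →
      ProbabilityTheory.IndepFun (ξ n) (ξ (n + K₁)) P)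
    (c : ℝ) (hc : ∀ n, c ≤ ∫ ω, ξ n ω ∂P) :
    ∀ᵐ ω ∂P, c ≤ atTop.liminf
      (fun N : ℕ => (1 / (N : ℝ)) * ∑ n ∈ Finset.Icc 1 N, ξ n ω) := by
  classical
  set m0 : ℕ → ℝ := fun n => ∫ ω, ξ n ω ∂P with hm0
  have hint : ∀ n, Integrable (ξ n) P := fun n =>
    (integrable_const M).mono' (hmeas n).aestronglyMeasurable
      ((hbdd n).mono fun ω h => by simpa using h)
  have hm0le : ∀ n, |m0 n| ≤ M := by
    intro n
    have := norm_integral_le_of_norm_le_const (μ := P) (f := ξ n) (C := M)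
      ((hbdd n).mono fun ω h => by simpa using h)
    simpa [hm0, measure_univ] using this
  set η : ℕ → Ω → ℝ := fun n ω => ξ n ω - m0 n with hη
  have hηmeas : ∀ n, Measurable (η n) := fun n => (hmeas n).sub measurable_const
  have hηint : ∀ n, Integrable (η n) P := fun n => (hint n).sub (integrable_const _)
  have hηmean : ∀ n, ∫ ω, η n ω ∂P = 0 := by
    intro n
    rw [hη]
    rw [integral_sub (hint n) (integrable_const _), integral_const]
    simp [hm0, measure_univ]
  have hηbdd : ∀ n, ∀ᵐ ω ∂P, |η n ω| ≤ 2 * M := by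
    intro n
    filter_upwards [hbdd n] with ω h
    calc |η n ω| ≤ |ξ n ω| + |m0 n| := abs_sub _ _
      _ ≤ M + M := add_le_add h (hm0le n)
      _ = 2 * M := by ring
  have hprodint : ∀ i j, Integrable (fun ω => η i ω * η j ω) P := fun i j =>
    (hηint j).bdd_mul (hηmeas i).aestronglyMeasurable
      ((hηbdd i).mono fun ω h => by simpa using h)
  have hcov0 : ∀ i j, i + K ≤ j → ∫ ω, η i ω * η j ω ∂P = 0 := by
    intro i j hij
    have h1 : ProbabilityTheory.IndepFun (ξ i) (ξ (i + (j - i))) P :=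
      hindep i (j - i) (by omega)
    rw [show i + (j - i) = j by omega] at h1
    have h2 : ProbabilityTheory.IndepFun (η i) (η j) P :=
      h1.comp (φ := fun x : ℝ => x - m0 i) (ψ := fun x : ℝ => x - m0 j)
        (measurable_id.sub measurable_const) (measurable_id.sub measurable_const)
    have h3 := h2.integral_mul_eq_mul_integral (hηint i).aestronglyMeasurable (hηint j).aestronglyMeasurable
    have h4 : ∫ ω, η i ω * η j ω ∂P = ∫ ω, (η i * η j) ω ∂P := rfl
    rw [h4, h3, hηmean i, hηmean j, mul_zero]
  have hcovb : ∀ i j, ∫ ω, η i ω * η j ω ∂P ≤ 4 * M ^ 2 := by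
    intro i j
    have hb : ∀ᵐ ω ∂P, ‖η i ω * η j ω‖ ≤ 4 * M ^ 2 := by
      filter_upwards [hηbdd i, hηbdd j] with ω h1 h2
      rw [Real.norm_eq_abs, abs_mul]
      nlinarith [abs_nonneg (η i ω), abs_nonneg (η j ω)]
    have := norm_integral_le_of_norm_le_const (μ := P) hb
    rw [Real.norm_eq_abs, probReal_univ] at this
    simp at this
    exact (le_abs_self _).trans this
  -- partial sums of the centered variables
  set S : ℕ → Ω → ℝ := fun N ω => ∑ n ∈ Finset.Ioc 0 N, η n ω with hS
  set B : ℝ := 4 * M ^ 2 * (2 * K + 1) with hB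
  have hS2 : ∀ N : ℕ, ∫ ω, (S N ω) ^ 2 ∂P ≤ B * N := by
    intro N
    set I := Finset.Ioc 0 N with hI
    have hcov0' : ∀ i j : ℕ, (i + K ≤ j ∨ j + K ≤ i) → ∫ ω, η i ω * η j ω ∂P = 0 := by
      rintro i j (h | h)
      · exact hcov0 i j h
      · have : (fun ω => η i ω * η j ω) = fun ω => η j ω * η i ω := by
          funext ω; ring
        rw [this]; exact hcov0 j i h
    have hrw : ∀ ω, (∑ n ∈ I, η n ω) ^ 2 = ∑ i ∈ I, ∑ j ∈ I, η i ω * η j ω := by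
      intro ω
      rw [sq, Finset.sum_mul_sum]
    calc ∫ ω, (S N ω) ^ 2 ∂P
        = ∫ ω, ∑ i ∈ I, ∑ j ∈ I, η i ω * η j ω ∂P := by
          congr 1; funext ω; exact hrw ω
      _ = ∑ i ∈ I, ∑ j ∈ I, ∫ ω, η i ω * η j ω ∂P := by
          rw [integral_finset_sum I fun i _ =>
            integrable_finset_sum I fun j _ => hprodint i j]
          exact Finset.sum_congr rfl fun i _ =>
            integral_finset_sum I fun j _ => hprodint i j
      _ ≤ ∑ i ∈ I, ∑ j ∈ I, (if j < i + K ∧ i < j + K then 4 * M ^ 2 else 0) := by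
          apply Finset.sum_le_sum
          intro i _
          apply Finset.sum_le_sum
          intro j _
          by_cases h : j < i + K ∧ i < j + K
          · rw [if_pos h]; exact hcovb i j
          · rw [if_neg h, hcov0' i j (by omega)]
      _ ≤ ∑ i ∈ I, (4 * M ^ 2 * (2 * K + 1)) := by
          apply Finset.sum_le_sum
          intro i _
          rw [← Finset.sum_filter]
          have hcard : (I.filter fun j => j < i + K ∧ i < j + K).card ≤ 2 * K + 1 := by
            have hsub : (I.filter fun j => j < i + K ∧ i < j + K) ⊆
                Finset.Icc (i - K) (i + K) := by
              intro j hj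
              simp only [Finset.mem_filter] at hj
              rw [Finset.mem_Icc]
              omega
            calc (I.filter fun j => j < i + K ∧ i < j + K).card
                ≤ (Finset.Icc (i - K) (i + K)).card := Finset.card_le_card hsub
              _ = i + K + 1 - (i - K) := Nat.card_Icc _ _
              _ ≤ 2 * K + 1 := by omega
          calc ∑ _j ∈ I.filter fun j => j < i + K ∧ i < j + K, 4 * M ^ 2
              = (I.filter fun j => j < i + K ∧ i < j + K).card * (4 * M ^ 2) := by
                rw [Finset.sum_const, nsmul_eq_mul]
            _ ≤ (2 * K + 1 : ℕ) * (4 * M ^ 2) := by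
                apply mul_le_mul_of_nonneg_right _ (by positivity)
                exact_mod_cast hcard
            _ = 4 * M ^ 2 * (2 * K + 1) := by push_cast; ring
      _ = B * N := by
          rw [Finset.sum_const, nsmul_eq_mul, Nat.card_Ioc, Nat.sub_zero, hB]
          ring
  have hSmeas : ∀ N, Measurable (S N) := fun N =>
    Finset.measurable_sum _ fun n _ => hηmeas n
  have hSbdd : ∀ N : ℕ, ∀ᵐ ω ∂P, |S N ω| ≤ 2 * M * N := by
    intro N
    filter_upwards [ae_all_iff.2 hηbdd] with ω h
    calc |S N ω| ≤ ∑ n ∈ Finset.Ioc 0 N, |η n ω| := Finset.abs_sum_le_sum_abs _ _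
      _ ≤ ∑ _n ∈ Finset.Ioc 0 N, 2 * M := Finset.sum_le_sum fun n _ => h n
      _ = 2 * M * N := by
          rw [Finset.sum_const, nsmul_eq_mul, Nat.card_Ioc, Nat.sub_zero]
          ring
  have hSint2 : ∀ N : ℕ, Integrable (fun ω => (S N ω) ^ 2) P := by
    intro N
    apply (integrable_const ((2 * M * N) ^ 2)).mono'
      (((hSmeas N).pow_const 2).aestronglyMeasurable)
    filter_upwards [hSbdd N] with ω h
    rw [Real.norm_eq_abs, abs_pow]
    have h0 : (0:ℝ) ≤ |S N ω| := abs_nonneg _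
    nlinarith
  -- the subsequence along squares
  set T : ℕ → Ω → ℝ := fun m ω => S (m ^ 2) ω / ((m : ℝ)) ^ 2 with hT
  have hTmeas : ∀ m, Measurable (T m) := fun m => (hSmeas (m ^ 2)).div_const _
  have hTint : ∀ m, Integrable (fun ω => (T m ω) ^ 2) P := by
    intro m
    have : (fun ω => (T m ω) ^ 2) = fun ω => (S (m ^ 2) ω) ^ 2 / (((m : ℝ)) ^ 2) ^ 2 := by
      funext ω; rw [hT]; rw [div_pow]
    rw [this]
    exact (hSint2 (m ^ 2)).div_const _
  have hTbound : ∀ m : ℕ, ∫ ω, (T m ω) ^ 2 ∂P ≤ B / (m : ℝ) ^ 2 := by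
    intro m
    rcases Nat.eq_zero_or_pos m with hm | hm
    · subst hm
      have : ∀ ω, (T 0 ω) ^ 2 = 0 := by
        intro ω; simp [hT]
      simp only [this]
      simp
    · have hmR : (0 : ℝ) < (m : ℝ) ^ 2 := by positivity
      have heq : (fun ω => (T m ω) ^ 2)
          = fun ω => (S (m ^ 2) ω) ^ 2 / (((m : ℝ)) ^ 2) ^ 2 := by
        funext ω; rw [hT]; rw [div_pow]
      calc ∫ ω, (T m ω) ^ 2 ∂P
          = (∫ ω, (S (m ^ 2) ω) ^ 2 ∂P) / (((m : ℝ)) ^ 2) ^ 2 := by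
            rw [heq, integral_div]
        _ ≤ (B * ((m ^ 2 : ℕ) : ℝ)) / (((m : ℝ)) ^ 2) ^ 2 := by
            apply div_le_div_of_nonneg_right (hS2 (m ^ 2)) (by positivity)
        _ = B / (m : ℝ) ^ 2 := by
            push_cast
            field_simp
  have hae := fd_ae_tendsto P T hTmeas hTint B hTbound
  -- the final pointwise argument
  filter_upwards [hae, ae_all_iff.2 hηbdd, ae_all_iff.2 hbdd] with ω hTω hηb hξb
  have hdiffω : ∀ a b : ℕ, a ≤ b → |S b ω - S a ω| ≤ 2 * M * ((b : ℝ) - a) := by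
    intro a b hab
    have hsum := Finset.sum_Ioc_consecutive (fun n => η n ω) (Nat.zero_le a) hab
    have heq : S b ω - S a ω = ∑ n ∈ Finset.Ioc a b, η n ω := by
      rw [hS]; simp only []
      linarith [hsum]
    rw [heq]
    calc |∑ n ∈ Finset.Ioc a b, η n ω| ≤ ∑ n ∈ Finset.Ioc a b, |η n ω| :=
        Finset.abs_sum_le_sum_abs _ _
      _ ≤ ∑ _n ∈ Finset.Ioc a b, 2 * M := Finset.sum_le_sum fun n _ => hηb n
      _ = 2 * M * ((b : ℝ) - a) := by
          rw [Finset.sum_const, nsmul_eq_mul, Nat.card_Ioc, Nat.cast_sub hab]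
          ring
  have htendS : Tendsto (fun N : ℕ => S N ω / N) atTop (nhds 0) :=
    fd_gap M hM (fun N => S N ω) hdiffω hTω
  -- rewrite the average of ξ in terms of S
  have hIcc : ∀ N : ℕ, Finset.Icc 1 N = Finset.Ioc 0 N := fun N => rfl
  have hval : ∀ N : ℕ, ∑ n ∈ Finset.Icc 1 N, ξ n ω
      = S N ω + ∑ n ∈ Finset.Icc 1 N, m0 n := by
    intro N
    rw [hS, hIcc N]
    rw [← Finset.sum_add_distrib]
    apply Finset.sum_congr rfl
    intro n _
    simp [hη]
  have hsum_m0 : ∀ N : ℕ, (N : ℝ) * c ≤ ∑ n ∈ Finset.Icc 1 N, m0 n := by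
    intro N
    have := Finset.card_nsmul_le_sum (Finset.Icc 1 N) m0 c fun n _ => hc n
    rw [Nat.card_Icc] at this
    simpa [nsmul_eq_mul] using this
  set u : ℕ → ℝ := fun N => (1 / (N : ℝ)) * ∑ n ∈ Finset.Icc 1 N, ξ n ω with hu
  have hu_ge : ∀ N : ℕ, 1 ≤ N → c + S N ω / N ≤ u N := by
    intro N hN
    have hNR : (0 : ℝ) < (N : ℝ) := by exact_mod_cast hN
    rw [hu]
    simp only []
    rw [hval N]
    have h2 : (1 / (N : ℝ)) * (S N ω + ∑ n ∈ Finset.Icc 1 N, m0 n)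
        = S N ω / N + (1 / (N : ℝ)) * ∑ n ∈ Finset.Icc 1 N, m0 n := by ring
    rw [h2]
    have h3 : c ≤ (1 / (N : ℝ)) * ∑ n ∈ Finset.Icc 1 N, m0 n := by
      rw [one_div, inv_mul_eq_div, le_div_iff₀ hNR]
      have := hsum_m0 N
      linarith
    linarith
  have hu_le : ∀ N : ℕ, u N ≤ M := by
    intro N
    rcases Nat.eq_zero_or_pos N with h | h
    · subst h; simp [hu]; positivity
    · have hNR : (0 : ℝ) < (N : ℝ) := by exact_mod_cast h
      have hsum : ∑ n ∈ Finset.Icc 1 N, ξ n ω ≤ (N : ℝ) * M := by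
        calc ∑ n ∈ Finset.Icc 1 N, ξ n ω ≤ ∑ _n ∈ Finset.Icc 1 N, M :=
            Finset.sum_le_sum fun n _ => (abs_le.1 (hξb n)).2
          _ = (N : ℝ) * M := by
              rw [Finset.sum_const, nsmul_eq_mul, Nat.card_Icc]
              simp
      rw [hu]
      simp only []
      rw [div_mul_eq_mul_div, one_mul, div_le_iff₀ hNR]
      linarith
  have hcb : IsCoboundedUnder (· ≥ ·) atTop u :=
    isCoboundedUnder_ge_of_eventually_le atTop (Eventually.of_forall hu_le)
  apply le_of_forall_sub_le
  intro ε hε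
  apply le_liminf_of_le hcb
  have h1 : ∀ᶠ N : ℕ in atTop, -ε < S N ω / N :=
    htendS.eventually (eventually_gt_nhds (by linarith : -ε < 0))
  filter_upwards [h1, eventually_ge_atTop 1] with N hN1 hN2
  have := hu_ge N hN2
  linarith
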